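/- Let G be a digraph with a global sink and let ρ be an acyclic rotor configuration on G. If chip configurations σ₁ and σ₂ are equivalent modulo the integer row span of the reduced Laplacian Δ'(G), then σ₁(ρ) = σ₂(ρ). -/

import Mathlib

/-!
If two chip configurations are equivalent modulo the reduced Laplacian, then routing
them to the sink from the same acyclic rotor configuration yields the same rotor
configuration (Holroyd et al., Lemma 3.13): σ₁ ≡ σ₂ (mod Δ') implies σ₁(ρ) = σ₂(ρ).
-/

/-- The out-degree of a vertex. -/
def outdeg {V E : Type} [Fintype E] [DecidableEq V] (tail : E → V) (v : V) : ℕ :=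
  (Finset.univ.filter (fun e => tail e = v)).card

/-- The number of edges from `v` to `w`. -/
def numEdges {V E : Type} [Fintype E] [DecidableEq V] (tail head : E → V) (v w : V) : ℕ :=
  (Finset.univ.filter (fun e => tail e = v ∧ head e = w)).card

/-- The vertices other than the (global) sink `s`. -/
abbrev Vne {V : Type} (s : V) : Type := {v : V // v ≠ s}

/-- The reduced Laplacian of the digraph. -/
def reducedLaplacian {V E : Type} [Fintype E] [DecidableEq V] (tail head : E → V)
    (s : V) : Matrix (Vne s) (Vne s) ℤ :=
  fun i j => (if i = j then (outdeg tail i.1 : ℤ) else 0) - (numEdges tail head i.1 j.1 : ℤ)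

/-- The integer row span of the reduced Laplacian. -/
def rowSpan {V E : Type} [Fintype E] [DecidableEq V] (tail head : E → V) (s : V) :
    Submodule ℤ (Vne s → ℤ) :=
  Submodule.span ℤ (Set.range (fun i => reducedLaplacian tail head s i))

/-- Rotor configurations on the non-sink vertices. -/
abbrev RotorConfig {V E : Type} (tail : E → V) (s : V) : Type :=
  {ρ : Vne s → E // ∀ v, tail (ρ v) = v.1}

/-- A chip-and-rotor state. -/
abbrev CRState {V E : Type} (tail : E → V) (s : V) : Type :=
  (Vne s → ℕ) × RotorConfig tail s

/-- Firing the non-sink vertex `v` in a chip-and-rotor state: the rotor at `v` advances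
to the next edge and one chip moves from `v` along it (disappearing at the sink). -/
def crFire {V E : Type} [DecidableEq V] {s : V} (tail head : E → V) (next : E → E)
    (hnext : ∀ e, tail (next e) = tail e)
    (τ : CRState tail s) (v : Vne s) : CRState tail s :=
  (fun u => (τ.1 u - if u = v then 1 else 0) +
      if u.1 = head (next (τ.2.1 v)) then 1 else 0,
   ⟨Function.update τ.2.1 v (next (τ.2.1 v)), by
      intro u
      rcases eq_or_ne u v with h | h
      · rw [h, Function.update_self, hnext]
        exact τ.2.2 v
      · rw [Function.update_of_ne h]
        exact τ.2.2 u⟩)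

/-- A non-sink vertex is active when it holds a chip. -/
def crActive {V E : Type} {s : V} (tail : E → V) (τ : CRState tail s) (v : Vne s) : Prop :=
  1 ≤ τ.1 v

/-- The result of firing the vertices in the list `l` in order. -/
def crFireList {V E : Type} [DecidableEq V] {s : V} (tail head : E → V) (next : E → E)
    (hnext : ∀ e, tail (next e) = tail e)
    (τ : CRState tail s) : List (Vne s) → CRState tail s
  | [] => τ
  | v :: l => crFireList tail head next hnext (crFire tail head next hnext τ v) l

/-- The firing sequence `l` is legal from `τ`. -/
def crLegal {V E : Type} [DecidableEq V] {s : V} (tail head : E → V) (next : E → E)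
    (hnext : ∀ e, tail (next e) = tail e)
    (τ : CRState tail s) : List (Vne s) → Prop
  | [] => True
  | v :: l => crActive tail τ v ∧ crLegal tail head next hnext (crFire tail head next hnext τ v) l

/-- `σ(ρ) = ρ'`: starting with chips `σ` and rotors `ρ`, all chips can be routed to
the sink by a legal firing sequence, leaving the rotor configuration `ρ'`. -/
def RoutesAll {V E : Type} [DecidableEq V] {s : V} (tail head : E → V) (next : E → E)
    (hnext : ∀ e, tail (next e) = tail e)
    (σ : Vne s → ℕ) (ρ ρ' : RotorConfig tail s) : Prop :=
  ∃ l : List (Vne s), crLegal tail head next hnext (σ, ρ) l ∧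
    (∀ v, (crFireList tail head next hnext (σ, ρ) l).1 v = 0) ∧
    (crFireList tail head next hnext (σ, ρ) l).2 = ρ'

/-- The vertex-successor map of a rotor configuration (fixing the sink). -/
def rotorSucc {V E : Type} [DecidableEq V] (tail head : E → V) (s : V)
    (ρ : RotorConfig tail s) : V → V :=
  fun u => if h : u = s then u else head (ρ.1 ⟨u, h⟩)

/-- A rotor configuration is acyclic when its edges contain no directed cycle. -/
def RAcyclic {V E : Type} [DecidableEq V] (tail head : E → V) (s : V)
    (ρ : RotorConfig tail s) : Prop :=
  ∀ (v : Vne s) (k : ℕ), 0 < k → (rotorSucc tail head s ρ)^[k] v.1 ≠ v.1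


set_option linter.unusedSectionVars false
set_option linter.unusedTactic false
set_option linter.unusedVariables false

section Orbit
variable {V E : Type} [Fintype E] [DecidableEq V]
variable (tail : E → V) (next : E → E)

lemma tail_iter (hnext : ∀ e, tail (next e) = tail e) (e : E) (k : ℕ) :
    tail (next^[k] e) = tail e := by
  induction k with
  | zero => rfl
  | succ k ih => rw [Function.iterate_succ_apply', hnext, ih]

lemma orbit_lemma (hnext : ∀ e, tail (next e) = tail e)
    (hcyc : ∀ e e' : E, tail e = tail e' → ∃ k, next^[k] e = e') (e : E) :
    next^[outdeg tail (tail e)] e = e ∧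
      (∀ i j, i < outdeg tail (tail e) → j < outdeg tail (tail e) →
        next^[i] e = next^[j] e → i = j) := by
  classical
  obtain ⟨m, hm⟩ := hcyc (next e) e (hnext e)
  have hex : ∃ p, 0 < p ∧ next^[p] e = e :=
    ⟨m + 1, Nat.succ_pos m, by rw [Function.iterate_succ_apply]; exact hm⟩
  set p := Nat.find hex with hpdef
  obtain ⟨hp0, hpe⟩ : 0 < p ∧ next^[p] e = e := Nat.find_spec hex
  have hmin : ∀ q, q < p → ¬(0 < q ∧ next^[q] e = e) := fun q hq => Nat.find_min hex hq
  have hmul : ∀ q k, next^[k + q * p] e = next^[k] e := by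
    intro q
    induction q with
    | zero => simp
    | succ q ih =>
      intro k
      have : k + (q + 1) * p = (k + q * p) + p := by ring
      rw [this, Function.iterate_add_apply, hpe, ih]
  have hmod : ∀ k, next^[k] e = next^[k % p] e := by
    intro k
    conv_lhs => rw [← Nat.mod_add_div' k p]
    rw [hmul]
  have hinjle : ∀ i j, i ≤ j → j < p → next^[i] e = next^[j] e → i = j := by
    intro i j hij hj heq
    by_contra hne
    have hlt : i < j := lt_of_le_of_ne hij hne
    have hpp : next^[(p - j) + i] e = e := by
      rw [Function.iterate_add_apply, heq, ← Function.iterate_add_apply,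
        Nat.sub_add_cancel (le_of_lt hj)]
      exact hpe
    exact hmin ((p - j) + i) (by omega) ⟨by omega, hpp⟩
  have hinj : ∀ i j, i < p → j < p → next^[i] e = next^[j] e → i = j := by
    intro i j hi hj heq
    rcases le_total i j with h | h
    · exact hinjle i j h hj heq
    · exact (hinjle j i h hi heq.symm).symm
  have himsub : (Finset.range p).image (fun j => next^[j] e)
      = Finset.univ.filter (fun e' => tail e' = tail e) := by
    ext e'
    simp only [Finset.mem_image, Finset.mem_range, Finset.mem_filter, Finset.mem_univ, true_and]
    constructor
    · rintro ⟨j, hj, rfl⟩; exact tail_iter tail next hnext e j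
    · intro he'
      obtain ⟨k, hk⟩ := hcyc e e' he'.symm
      exact ⟨k % p, Nat.mod_lt k hp0, by rw [← hmod]; exact hk⟩
  have hcard : p = outdeg tail (tail e) := by
    have h1 : ((Finset.range p).image (fun j => next^[j] e)).card = p := by
      rw [Finset.card_image_of_injOn, Finset.card_range]
      intro i hi j hj hij
      exact hinj i j (by simpa using hi) (by simpa using hj) hij
    rw [himsub] at h1
    rw [← h1]; rfl
  exact ⟨by rw [← hcard]; exact hpe, by rw [← hcard]; exact hinj⟩

lemma iter_outdeg (hnext : ∀ e, tail (next e) = tail e)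
    (hcyc : ∀ e e' : E, tail e = tail e' → ∃ k, next^[k] e = e') (e : E) :
    next^[outdeg tail (tail e)] e = e :=
  (orbit_lemma tail next hnext hcyc e).1

lemma iter_add_mul (hnext : ∀ e, tail (next e) = tail e)
    (hcyc : ∀ e e' : E, tail e = tail e' → ∃ k, next^[k] e = e') (e : E) (u q : ℕ) :
    next^[u + q * outdeg tail (tail e)] e = next^[u] e := by
  induction q with
  | zero => simp
  | succ q ih =>
    have : u + (q + 1) * outdeg tail (tail e) = (u + q * outdeg tail (tail e)) + outdeg tail (tail e) := by ring
    rw [this, Function.iterate_add_apply, iter_outdeg tail next hnext hcyc e, ih]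

lemma sum_range_outdeg (head : E → V) (hnext : ∀ e, tail (next e) = tail e)
    (hcyc : ∀ e e' : E, tail e = tail e' → ∃ k, next^[k] e = e') (e : E) (w : V) :
    (∑ j ∈ Finset.range (outdeg tail (tail e)), if head (next^[j] e) = w then (1:ℤ) else 0)
      = numEdges tail head (tail e) w := by
  classical
  obtain ⟨hper, hinj⟩ := orbit_lemma tail next hnext hcyc e
  have himsub : (Finset.range (outdeg tail (tail e))).image (fun j => next^[j] e)
      = Finset.univ.filter (fun e' => tail e' = tail e) := by
    apply Finset.eq_of_subset_of_card_le
    · intro e' he'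
      simp only [Finset.mem_image, Finset.mem_range] at he'
      obtain ⟨j, hj, rfl⟩ := he'
      simp only [Finset.mem_filter, Finset.mem_univ, true_and]
      exact tail_iter tail next hnext e j
    · rw [Finset.card_image_of_injOn]
      · rw [Finset.card_range]; rfl
      · intro i hi j hj hij
        exact hinj i j (by simpa using hi) (by simpa using hj) hij
  have hinj' : Set.InjOn (fun j => next^[j] e) (Finset.range (outdeg tail (tail e))) := by
    intro i hi j hj hij
    exact hinj i j (by simpa using hi) (by simpa using hj) hij
  have hsi := Finset.sum_image (s := Finset.range (outdeg tail (tail e)))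
    (f := fun e' => if head e' = w then (1:ℤ) else 0) (g := fun j => next^[j] e)
    (fun x hx y hy => hinj' hx hy)
  rw [← hsi, himsub, Finset.sum_boole, numEdges, Finset.filter_filter]

end Orbit

def winS {V E : Type} [DecidableEq V] (head : E → V) (next : E → E) (e : E) (w : V)
    (a b : ℕ) : ℤ :=
  ∑ j ∈ Finset.Ico a b, if head (next^[j + 1] e) = w then 1 else 0

section WinS
variable {V E : Type} [Fintype E] [DecidableEq V]
variable (tail head : E → V) (next : E → E)

lemma winS_nonneg (e : E) (w : V) (a b : ℕ) : 0 ≤ winS head next e w a b :=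
  Finset.sum_nonneg fun j _ => by positivity

lemma winS_concat (e : E) (w : V) {a b c : ℕ} (hab : a ≤ b) (hbc : b ≤ c) :
    winS head next e w a c = winS head next e w a b + winS head next e w b c :=
  (Finset.sum_Ico_consecutive _ hab hbc).symm

lemma winS_single (e : E) (w : V) (a : ℕ) :
    winS head next e w a (a + 1) = if head (next^[a + 1] e) = w then 1 else 0 := by
  rw [winS, Nat.Ico_succ_singleton, Finset.sum_singleton]

lemma winS_period (hnext : ∀ e, tail (next e) = tail e)
    (hcyc : ∀ e e' : E, tail e = tail e' → ∃ k, next^[k] e = e') (e : E) (w : V) (a : ℕ) :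
    winS head next e w a (a + outdeg tail (tail e)) = numEdges tail head (tail e) w := by
  rw [winS, Finset.sum_Ico_eq_sum_range]
  simp only [Nat.add_sub_cancel_left]
  have he' : tail (next^[a + 1] e) = tail e := tail_iter tail next hnext e (a + 1)
  have hkey := sum_range_outdeg tail next head hnext hcyc (next^[a + 1] e) w
  rw [he'] at hkey
  rw [← hkey]
  apply Finset.sum_congr rfl
  intro j _
  rw [show a + j + 1 = j + (a + 1) by omega, Function.iterate_add_apply]

lemma winS_add_mul (hnext : ∀ e, tail (next e) = tail e)
    (hcyc : ∀ e e' : E, tail e = tail e' → ∃ k, next^[k] e = e') (e : E) (w : V) (u q : ℕ) :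
    winS head next e w 0 (u + q * outdeg tail (tail e))
      = winS head next e w 0 u + q * numEdges tail head (tail e) w := by
  induction q with
  | zero => simp
  | succ q ih =>
    have h1 : u + (q + 1) * outdeg tail (tail e)
        = (u + q * outdeg tail (tail e)) + outdeg tail (tail e) := by ring
    rw [h1, winS_concat head next e w (Nat.zero_le _) (Nat.le_add_right _ _), ih,
      winS_period tail head next hnext hcyc]
    push_cast
    ring

end WinS

section Fire
variable {V E : Type} [Fintype V] [DecidableEq V] [Fintype E]
variable (tail head : E → V) (next : E → E) (hnext : ∀ e, tail (next e) = tail e)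
variable {s : V}

lemma rotor_after (l : List (Vne s)) :
    ∀ (τ : CRState tail s) (v : Vne s),
      (crFireList tail head next hnext τ l).2.1 v = next^[l.count v] (τ.2.1 v) := by
  induction l with
  | nil => intro τ v; simp [crFireList]
  | cons v₀ l ih =>
    intro τ v
    show (crFireList tail head next hnext (crFire tail head next hnext τ v₀) l).2.1 v = _
    rw [ih]
    rcases eq_or_ne v v₀ with h | h
    · subst h
      rw [List.count_cons_self]
      show next^[l.count v] (Function.update τ.2.1 v (next (τ.2.1 v)) v) = _
      rw [Function.update_self, ← Function.iterate_succ_apply]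
    · rw [List.count_cons_of_ne (by simpa using h.symm)]
      show next^[l.count v] (Function.update τ.2.1 v₀ (next (τ.2.1 v₀)) v) = _
      rw [Function.update_of_ne h]

lemma chip_balance (ρ : RotorConfig tail s) (l : List (Vne s)) :
    ∀ (c : Vne s → ℕ) (β : RotorConfig tail s) (m : Vne s → ℕ),
      (∀ v, β.1 v = next^[m v] (ρ.1 v)) →
      crLegal tail head next hnext (c, β) l →
      ∀ w : Vne s,
        ((crFireList tail head next hnext (c, β) l).1 w : ℤ)
          = (c w : ℤ) - l.count w
            + ∑ v : Vne s, winS head next (ρ.1 v) w.1 (m v) (m v + l.count v) := by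
  induction l with
  | nil =>
    intro c β m hβ _ w
    simp [crFireList, winS]
  | cons v₀ l ih =>
    intro c β m hβ hleg w
    obtain ⟨hact, hleg'⟩ := hleg
    have hact' : 1 ≤ c v₀ := hact
    set τ' := crFire tail head next hnext (c, β) v₀ with hτ'
    set m' : Vne s → ℕ := Function.update m v₀ (m v₀ + 1) with hm'
    have hβ' : ∀ v, τ'.2.1 v = next^[m' v] (ρ.1 v) := by
      intro v
      show Function.update β.1 v₀ (next (β.1 v₀)) v = _
      rcases eq_or_ne v v₀ with h | h
      · subst h
        rw [Function.update_self, hβ v, hm', Function.update_self]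
        exact (Function.iterate_succ_apply' next (m v) (ρ.1 v)).symm
      · rw [Function.update_of_ne h, hβ v, hm', Function.update_of_ne h]
    have hIH := ih τ'.1 τ'.2 m' hβ' hleg' w
    show ((crFireList tail head next hnext τ' l).1 w : ℤ) = _
    rw [hIH]
    have hc' : (τ'.1 w : ℤ) = (c w : ℤ) - (if w = v₀ then 1 else 0)
        + (if head (next^[m v₀ + 1] (ρ.1 v₀)) = w.1 then 1 else 0) := by
      show (((c w - if w = v₀ then 1 else 0) + if w.1 = head (next (β.1 v₀)) then 1 else 0 : ℕ) : ℤ) = _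
      have hle : (if w = v₀ then 1 else 0) ≤ c w := by
        split
        · next h => subst h; exact hact'
        · exact Nat.zero_le _
      have hh : head (next (β.1 v₀)) = head (next^[m v₀ + 1] (ρ.1 v₀)) := by
        rw [hβ v₀]
        exact congrArg head (Function.iterate_succ_apply' next (m v₀) (ρ.1 v₀)).symm
      push_cast [Nat.cast_sub hle]
      rw [hh]
      congr 1
      by_cases h : head (next^[m v₀ + 1] (ρ.1 v₀)) = w.1
      · rw [if_pos h, if_pos h.symm]
      · rw [if_neg h, if_neg (fun hx => h hx.symm)]
    have hcount : ((v₀ :: l).count w : ℤ) = (l.count w : ℤ) + (if w = v₀ then 1 else 0) := by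
      rcases eq_or_ne w v₀ with h | h
      · subst h
        rw [List.count_cons_self, if_pos rfl]
        push_cast
        ring
      · rw [List.count_cons_of_ne (by simpa using h.symm), if_neg h]
        push_cast
        ring
    have hsum : (∑ v : Vne s, winS head next (ρ.1 v) w.1 (m v) (m v + (v₀ :: l).count v))
        = (∑ v : Vne s, winS head next (ρ.1 v) w.1 (m' v) (m' v + l.count v))
          + (if head (next^[m v₀ + 1] (ρ.1 v₀)) = w.1 then 1 else 0) := by
      have hdiff : ∀ v : Vne s,
          winS head next (ρ.1 v) w.1 (m v) (m v + (v₀ :: l).count v)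
            - winS head next (ρ.1 v) w.1 (m' v) (m' v + l.count v)
          = if v = v₀ then (if head (next^[m v₀ + 1] (ρ.1 v₀)) = w.1 then (1:ℤ) else 0) else 0 := by
        intro v
        rcases eq_or_ne v v₀ with h | h
        · subst h
          rw [if_pos rfl, List.count_cons_self, hm', Function.update_self]
          have h1 : m v + (l.count v + 1) = (m v + 1) + l.count v := by omega
          rw [h1, winS_concat head next (ρ.1 v) w.1 (by omega : m v ≤ m v + 1)
            (Nat.le_add_right _ _), winS_single]
          ring
        · rw [if_neg h, List.count_cons_of_ne (by simpa using h.symm), hm',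
            Function.update_of_ne h]
          ring
      have := Finset.sum_congr rfl (fun v (_ : v ∈ Finset.univ) => hdiff v)
      rw [Finset.sum_sub_distrib] at this
      rw [Finset.sum_ite_eq' Finset.univ v₀] at this
      simp only [Finset.mem_univ, if_pos] at this
      linarith
    rw [hc', hcount, hsum]
    ring

end Fire

section Acyc
variable {V E : Type} [Fintype V] [DecidableEq V] [Fintype E]
variable (tail head : E → V) (next : E → E) (hnext : ∀ e, tail (next e) = tail e)
variable {s : V}

lemma rotorSucc_sink (γ : RotorConfig tail s) : rotorSucc tail head s γ s = s := by
  rw [rotorSucc, dif_pos rfl]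

lemma rotorSucc_iter_sink (γ : RotorConfig tail s) (j : ℕ) :
    (rotorSucc tail head s γ)^[j] s = s := by
  induction j with
  | zero => rfl
  | succ j ih => rw [Function.iterate_succ_apply', ih, rotorSucc_sink]

lemma rotorSucc_ne (γ : RotorConfig tail s) (x : V) (hx : x ≠ s) :
    rotorSucc tail head s γ x = head (γ.1 ⟨x, hx⟩) := by
  rw [rotorSucc, dif_neg hx]

def InvP (τ : CRState tail s) : Prop :=
  ∀ (v : Vne s) (k : ℕ), 0 < k → (rotorSucc tail head s τ.2)^[k] v.1 = v.1 →
    ∃ u : Vne s, 1 ≤ τ.1 u ∧ ∃ i, i < k ∧ (rotorSucc tail head s τ.2)^[i] v.1 = u.1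

lemma inv_fire (τ : CRState tail s) (v₀ : Vne s) (hinv : InvP tail head τ) :
    InvP tail head (crFire tail head next hnext τ v₀) := by
  set τ' := crFire tail head next hnext τ v₀ with hτ'
  set g' := rotorSucc tail head s τ'.2 with hg'
  set g := rotorSucc tail head s τ.2 with hg
  have hupd : τ'.2.1 = Function.update τ.2.1 v₀ (next (τ.2.1 v₀)) := rfl
  have hchip : ∀ u : Vne s, τ'.1 u
      = (τ.1 u - if u = v₀ then 1 else 0) + if u.1 = head (next (τ.2.1 v₀)) then 1 else 0 :=
    fun u => rfl
  have hg'v₀ : g' v₀.1 = head (next (τ.2.1 v₀)) := by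
    rw [hg', rotorSucc_ne tail head τ'.2 v₀.1 v₀.2, hupd]
    congr 1
    exact Function.update_self v₀ _ _
  have hagree : ∀ x : V, x ≠ v₀.1 → g' x = g x := by
    intro x hx
    by_cases hxs : x = s
    · subst hxs
      rw [hg', hg, rotorSucc_sink, rotorSucc_sink]
    · rw [hg', hg, rotorSucc_ne tail head τ'.2 x hxs, rotorSucc_ne tail head τ.2 x hxs, hupd,
        Function.update_of_ne (fun he => hx (congrArg Subtype.val he))]
  intro v k hk hcy
  by_cases hexist : ∃ i, i < k ∧ g'^[i] v.1 = v₀.1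
  · obtain ⟨i, hik, hi⟩ := hexist
    set x := head (next (τ.2.1 v₀)) with hx
    have hstep : g'^[i + 1] v.1 = x := by
      rw [Function.iterate_succ_apply', hi, hg'v₀]
    have hxs : x ≠ s := by
      intro hxsink
      have hks : g'^[k] v.1 = s := by
        have h2 : k = (k - (i + 1)) + (i + 1) := by omega
        rw [h2, Function.iterate_add_apply, hstep, hxsink, rotorSucc_iter_sink]
      exact v.2 (by rw [← hcy, hks])
    refine ⟨⟨x, hxs⟩, ?_, ?_⟩
    · rw [hchip]
      have : ((⟨x, hxs⟩ : Vne s).1 = head (next (τ.2.1 v₀))) := rfl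
      rw [if_pos this]
      omega
    · rcases eq_or_ne (i + 1) k with he | hne
      · refine ⟨0, hk, ?_⟩
        have hvx : v.1 = x := by rw [← hcy, ← he, hstep]
        simpa using hvx.symm ▸ rfl
      · exact ⟨i + 1, by omega, hstep⟩
  · push_neg at hexist
    have hiter : ∀ i, i ≤ k → g'^[i] v.1 = g^[i] v.1 := by
      intro i
      induction i with
      | zero => intro _; rfl
      | succ i ih =>
        intro hik
        rw [Function.iterate_succ_apply', Function.iterate_succ_apply',
          hagree _ (hexist i (by omega)), ih (by omega)]
    have hcyg : g^[k] v.1 = v.1 := by rw [← hiter k le_rfl]; exact hcy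
    obtain ⟨u, hu1, i, hik, hiu⟩ := hinv v k hk hcyg
    have hune : u ≠ v₀ := by
      intro he
      subst he
      exact hexist i hik (by rw [hiter i (le_of_lt hik)]; exact hiu)
    refine ⟨u, ?_, i, hik, by rw [hiter i (le_of_lt hik)]; exact hiu⟩
    rw [hchip, if_neg hune]
    split <;> omega

lemma inv_fireList (l : List (Vne s)) :
    ∀ τ : CRState tail s, InvP tail head τ →
      InvP tail head (crFireList tail head next hnext τ l) := by
  induction l with
  | nil => intro τ h; exact h
  | cons v₀ l ih =>
    intro τ h
    exact ih _ (inv_fire tail head next hnext τ v₀ h)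

lemma racyclic_of_routes (ρ ρ' : RotorConfig tail s) (hρ : RAcyclic tail head s ρ)
    (σ : Vne s → ℕ) (h : RoutesAll tail head next hnext σ ρ ρ') :
    RAcyclic tail head s ρ' := by
  obtain ⟨l, hleg, hzero, hrot⟩ := h
  have h0 : InvP tail head ((σ, ρ) : CRState tail s) := by
    intro v k hk hcy
    exact absurd hcy (hρ v k hk)
  have hI := inv_fireList tail head next hnext l (σ, ρ) h0
  intro v k hk hcy
  rw [← hrot] at hcy
  obtain ⟨u, hu1, _⟩ := hI v k hk hcy
  rw [hzero u] at hu1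
  omega

end Acyc

section Core
variable {V E : Type} [Fintype V] [DecidableEq V] [Fintype E]

lemma core_lemma (tail head : E → V) (next : E → E)
    (hnext : ∀ e, tail (next e) = tail e)
    (hcyc : ∀ e e' : E, tail e = tail e' → ∃ k, next^[k] e = e')
    {s : V} (ρ ρf : RotorConfig tail s)
    (hacyc : RAcyclic tail head s ρf)
    (A B : Vne s → ℕ)
    (hlast : ∀ v, next^[A v] (ρ.1 v) = ρf.1 v)
    (hid : ∀ w : Vne s, ((A w : ℤ) - B w)
      = ∑ v : Vne s, (winS head next (ρ.1 v) w.1 0 (A v) - winS head next (ρ.1 v) w.1 0 (B v))) :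
    ∀ v : Vne s, A v ≤ B v := by
  classical
  by_contra hcon
  push_neg at hcon
  obtain ⟨v₀, hv₀⟩ := hcon
  set Aset : Finset (Vne s) := Finset.univ.filter (fun v => B v < A v) with hAset
  have hv₀A : v₀ ∈ Aset := by
    rw [hAset, Finset.mem_filter]
    exact ⟨Finset.mem_univ _, hv₀⟩
  set eS : Vne s → ℤ := fun v => ∑ w ∈ Aset, (if head (ρf.1 v) = w.1 then (1:ℤ) else 0)
    with heS
  have hcnt_le : ∀ x : V, (∑ w ∈ Aset, if x = w.1 then (1:ℤ) else 0) ≤ 1 := by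
    intro x
    rw [Finset.sum_boole]
    have : (Aset.filter (fun w => x = w.1)).card ≤ 1 := by
      apply Finset.card_le_one.2
      intro a ha b hb
      rw [Finset.mem_filter] at ha hb
      exact Subtype.ext (ha.2 ▸ hb.2.symm ▸ rfl)
    exact_mod_cast this
  -- bound for v not in Aset
  have hneg : ∀ v : Vne s, A v ≤ B v → ∀ w : Vne s,
      winS head next (ρ.1 v) w.1 0 (A v) - winS head next (ρ.1 v) w.1 0 (B v) ≤ 0 := by
    intro v hv w
    have hc := winS_concat head next (ρ.1 v) w.1 (Nat.zero_le (A v)) hv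
    have hnn := winS_nonneg head next (ρ.1 v) w.1 (A v) (B v)
    linarith
  -- bound for v in Aset
  have hpos : ∀ v ∈ Aset, (∑ w ∈ Aset,
      (winS head next (ρ.1 v) w.1 0 (A v) - winS head next (ρ.1 v) w.1 0 (B v)))
      ≤ ((A v : ℤ) - B v) - 1 + eS v := by
    intro v hvA
    have hBA : B v < A v := by
      rw [hAset, Finset.mem_filter] at hvA
      exact hvA.2
    have hsplit : ∀ w : Vne s,
        winS head next (ρ.1 v) w.1 0 (A v) - winS head next (ρ.1 v) w.1 0 (B v)
          = winS head next (ρ.1 v) w.1 (B v) (A v) := by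
      intro w
      have hc := winS_concat head next (ρ.1 v) w.1 (Nat.zero_le (B v)) (le_of_lt hBA)
      linarith
    have hswap : (∑ w ∈ Aset, winS head next (ρ.1 v) w.1 (B v) (A v))
        = ∑ j ∈ Finset.Ico (B v) (A v), ∑ w ∈ Aset,
            (if head (next^[j + 1] (ρ.1 v)) = w.1 then (1:ℤ) else 0) := by
      rw [Finset.sum_comm]
      rfl
    have hA1 : A v = (A v - 1) + 1 := by omega
    have htop : (∑ j ∈ Finset.Ico (B v) (A v), ∑ w ∈ Aset,
        (if head (next^[j + 1] (ρ.1 v)) = w.1 then (1:ℤ) else 0))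
        = (∑ j ∈ Finset.Ico (B v) (A v - 1), ∑ w ∈ Aset,
            (if head (next^[j + 1] (ρ.1 v)) = w.1 then (1:ℤ) else 0))
          + ∑ w ∈ Aset, (if head (next^[(A v - 1) + 1] (ρ.1 v)) = w.1 then (1:ℤ) else 0) := by
      conv_lhs => rw [hA1]
      exact Finset.sum_Ico_succ_top (by omega) _
    have hmid : (∑ j ∈ Finset.Ico (B v) (A v - 1), ∑ w ∈ Aset,
        (if head (next^[j + 1] (ρ.1 v)) = w.1 then (1:ℤ) else 0))
        ≤ ((A v : ℤ) - B v) - 1 := by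
      have hb := Finset.sum_le_card_nsmul (Finset.Ico (B v) (A v - 1))
        (fun j => ∑ w ∈ Aset, (if head (next^[j + 1] (ρ.1 v)) = w.1 then (1:ℤ) else 0)) 1
        (fun j _ => hcnt_le _)
      rw [Nat.card_Ico] at hb
      have : ((A v - 1 - B v : ℕ) : ℤ) = (A v : ℤ) - B v - 1 := by omega
      simp only [nsmul_eq_mul, mul_one] at hb
      linarith
    have hlastterm : (∑ w ∈ Aset, (if head (next^[(A v - 1) + 1] (ρ.1 v)) = w.1
        then (1:ℤ) else 0)) = eS v := by
      rw [show A v - 1 + 1 = A v by omega, hlast v, heS]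
    calc (∑ w ∈ Aset,
        (winS head next (ρ.1 v) w.1 0 (A v) - winS head next (ρ.1 v) w.1 0 (B v)))
        = ∑ w ∈ Aset, winS head next (ρ.1 v) w.1 (B v) (A v) :=
          Finset.sum_congr rfl (fun w _ => hsplit w)
      _ = _ := hswap
      _ = _ := htop
      _ ≤ ((A v : ℤ) - B v) - 1 + eS v := by rw [hlastterm]; linarith
  -- global inequality
  have hsum1 : (∑ v ∈ Aset, ((A v : ℤ) - B v))
      = ∑ v : Vne s, ∑ w ∈ Aset,
          (winS head next (ρ.1 v) w.1 0 (A v) - winS head next (ρ.1 v) w.1 0 (B v)) := by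
    rw [← Finset.sum_comm]
    exact Finset.sum_congr rfl (fun w _ => hid w)
  have hsum2 : (∑ v : Vne s, ∑ w ∈ Aset,
      (winS head next (ρ.1 v) w.1 0 (A v) - winS head next (ρ.1 v) w.1 0 (B v)))
      ≤ ∑ v ∈ Aset, (((A v : ℤ) - B v) - 1 + eS v) := by
    rw [← Finset.sum_filter_add_sum_filter_not Finset.univ (fun v => B v < A v)]
    have h2 : (∑ v ∈ Finset.univ.filter (fun v => ¬ B v < A v), ∑ w ∈ Aset,
        (winS head next (ρ.1 v) w.1 0 (A v) - winS head next (ρ.1 v) w.1 0 (B v))) ≤ 0 := by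
      apply Finset.sum_nonpos
      intro v hv
      rw [Finset.mem_filter] at hv
      exact Finset.sum_nonpos (fun w _ => hneg v (by omega) w)
    have h1 := Finset.sum_le_sum hpos
    exact add_le_add h1 h2 |>.trans (by linarith)
  have hnn : ∀ v ∈ Aset, (0:ℤ) ≤ 1 - eS v := by
    intro v hv
    have := hcnt_le (head (ρf.1 v))
    rw [heS]
    linarith
  have hzero : ∑ v ∈ Aset, ((1:ℤ) - eS v) = 0 := by
    apply le_antisymm
    · have h3 : ∑ v ∈ Aset, (((A v : ℤ) - B v) - 1 + eS v)
          = (∑ v ∈ Aset, ((A v : ℤ) - B v)) - ∑ v ∈ Aset, ((1:ℤ) - eS v) := by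
        rw [← Finset.sum_sub_distrib]
        exact Finset.sum_congr rfl (fun v _ => by ring)
      have := hsum1.trans_le hsum2
      rw [h3] at this
      linarith
    · exact Finset.sum_nonneg hnn
  have heach : ∀ v ∈ Aset, eS v = 1 := by
    intro v hv
    have := (Finset.sum_eq_zero_iff_of_nonneg hnn).1 hzero v hv
    linarith
  have hmem : ∀ v ∈ Aset, ∃ hne : head (ρf.1 v) ≠ s,
      (⟨head (ρf.1 v), hne⟩ : Vne s) ∈ Aset := by
    intro v hv
    have h1 := heach v hv
    have hex : ∃ w ∈ Aset, head (ρf.1 v) = w.1 := by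
      by_contra hno
      push_neg at hno
      have : eS v = 0 := by
        rw [heS]
        exact Finset.sum_eq_zero (fun w hw => if_neg (hno w hw))
      omega
    obtain ⟨w, hwA, hwv⟩ := hex
    have hne : head (ρf.1 v) ≠ s := by rw [hwv]; exact w.2
    refine ⟨hne, ?_⟩
    have : (⟨head (ρf.1 v), hne⟩ : Vne s) = w := Subtype.ext hwv
    rw [this]
    exact hwA
  have hchain : ∀ i : ℕ, ∃ x : Vne s, x ∈ Aset ∧
      (rotorSucc tail head s ρf)^[i] v₀.1 = x.1 := by
    intro i
    induction i with
    | zero => exact ⟨v₀, hv₀A, rfl⟩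
    | succ i ih =>
      obtain ⟨x, hxA, hxe⟩ := ih
      obtain ⟨hne, hmem'⟩ := hmem x hxA
      refine ⟨⟨head (ρf.1 x), hne⟩, hmem', ?_⟩
      rw [Function.iterate_succ_apply', hxe, rotorSucc_ne tail head ρf x.1 x.2]
  obtain ⟨a, b, hab, heqab⟩ :=
    Finite.exists_ne_map_eq_of_infinite (fun i : ℕ => (rotorSucc tail head s ρf)^[i] v₀.1)
  have hij : ∃ i j : ℕ, i < j ∧ (rotorSucc tail head s ρf)^[i] v₀.1
      = (rotorSucc tail head s ρf)^[j] v₀.1 := by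
    rcases lt_or_gt_of_ne hab with h | h
    · exact ⟨a, b, h, heqab⟩
    · exact ⟨b, a, h, heqab.symm⟩
  obtain ⟨i, j, hijlt, hije⟩ := hij
  obtain ⟨x, hxA, hxe⟩ := hchain i
  have hcyc' : (rotorSucc tail head s ρf)^[j - i] x.1 = x.1 := by
    rw [← hxe, ← Function.iterate_add_apply, show j - i + i = j by omega, ← hije]
  exact hacyc x (j - i) (by omega) hcyc'

end Core

/-- **Equivalent chip configurations act identically on acyclic rotor configurations.**
Let `G` be a digraph with a global sink and `ρ` an acyclic rotor configuration.  If
the chip configurations `σ₁` and `σ₂` are equivalent modulo the integer row span of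
the reduced Laplacian, then `σ₁(ρ) = σ₂(ρ)`. -/
theorem equivalent_configurations_act_equally
    {V E : Type} [Fintype V] [DecidableEq V] [Fintype E]
    (tail head : E → V) (next : E → E)
    (hnext : ∀ e, tail (next e) = tail e)
    (hcyc : ∀ e e' : E, tail e = tail e' → ∃ k, next^[k] e = e')
    (s : V) (hs : outdeg tail s = 0)
    (hglobal : ∀ v : V,
      Relation.ReflTransGen (fun a b => ∃ e, tail e = a ∧ head e = b) v s)
    (ρ : RotorConfig tail s) (hρ : RAcyclic tail head s ρ)
    (σ₁ σ₂ : Vne s → ℕ)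
    (hequiv : ((fun v => (σ₁ v : ℤ)) - fun v => (σ₂ v : ℤ)) ∈ rowSpan tail head s)
    (ρ₁' ρ₂' : RotorConfig tail s)
    (h₁ : RoutesAll tail head next hnext σ₁ ρ ρ₁')
    (h₂ : RoutesAll tail head next hnext σ₂ ρ ρ₂') :
    ρ₁' = ρ₂' := by
  classical
  have hac₁ := racyclic_of_routes tail head next hnext ρ ρ₁' hρ σ₁ h₁
  have hac₂ := racyclic_of_routes tail head next hnext ρ ρ₂' hρ σ₂ h₂
  obtain ⟨l₁, hleg₁, hz₁, hr₁⟩ := h₁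
  obtain ⟨l₂, hleg₂, hz₂, hr₂⟩ := h₂
  -- chip balance for the two runs
  have hbal₁ : ∀ w : Vne s, (0:ℤ) = (σ₁ w : ℤ) - l₁.count w
      + ∑ v : Vne s, winS head next (ρ.1 v) w.1 0 (l₁.count v) := by
    intro w
    have hb := chip_balance tail head next hnext ρ l₁ σ₁ ρ (fun _ => 0)
      (fun v => rfl) hleg₁ w
    rw [hz₁ w] at hb
    simp only [Nat.zero_add, Nat.cast_zero] at hb
    exact hb
  have hbal₂ : ∀ w : Vne s, (0:ℤ) = (σ₂ w : ℤ) - l₂.count w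
      + ∑ v : Vne s, winS head next (ρ.1 v) w.1 0 (l₂.count v) := by
    intro w
    have hb := chip_balance tail head next hnext ρ l₂ σ₂ ρ (fun _ => 0)
      (fun v => rfl) hleg₂ w
    rw [hz₂ w] at hb
    simp only [Nat.zero_add, Nat.cast_zero] at hb
    exact hb
  -- final rotor positions
  have hrot₁ : ∀ v : Vne s, ρ₁'.1 v = next^[l₁.count v] (ρ.1 v) := by
    intro v
    rw [← hr₁]
    exact rotor_after tail head next hnext l₁ (σ₁, ρ) v
  have hrot₂ : ∀ v : Vne s, ρ₂'.1 v = next^[l₂.count v] (ρ.1 v) := by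
    intro v
    rw [← hr₂]
    exact rotor_after tail head next hnext l₂ (σ₂, ρ) v
  -- extract coefficients from the span hypothesis
  rw [rowSpan] at hequiv
  obtain ⟨n, hn⟩ := (Submodule.mem_span_range_iff_exists_fun ℤ).1 hequiv
  have hσ : ∀ w : Vne s, (σ₁ w : ℤ) - σ₂ w
      = n w * outdeg tail w.1 - ∑ v : Vne s, n v * numEdges tail head v.1 w.1 := by
    intro w
    have h1 := congrFun hn w
    simp only [Finset.sum_apply, Pi.smul_apply, smul_eq_mul, Pi.sub_apply,
      reducedLaplacian] at h1
    simp only [mul_sub, Finset.sum_sub_distrib, mul_ite, mul_zero] at h1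
    rw [Finset.sum_ite_eq' Finset.univ w (fun i => n i * (outdeg tail i.1 : ℤ)),
      if_pos (Finset.mem_univ w)] at h1
    linarith
  have hid_pre : ∀ w : Vne s, (l₁.count w : ℤ) - l₂.count w - n w * outdeg tail w.1
      = ∑ v : Vne s, (winS head next (ρ.1 v) w.1 0 (l₁.count v)
          - winS head next (ρ.1 v) w.1 0 (l₂.count v)
          - n v * numEdges tail head v.1 w.1) := by
    intro w
    rw [Finset.sum_sub_distrib, Finset.sum_sub_distrib]
    have b₁ := hbal₁ w
    have b₂ := hbal₂ w
    have b₃ := hσ w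
    linarith
  -- the shifted windows
  set Aa : Vne s → ℕ := fun v => l₁.count v + (-(n v)).toNat * outdeg tail v.1 with hAa
  set Bb : Vne s → ℕ := fun v => l₂.count v + (n v).toNat * outdeg tail v.1 with hBb
  have hlastA : ∀ v : Vne s, next^[Aa v] (ρ.1 v) = ρ₁'.1 v := by
    intro v
    have h2 := iter_add_mul tail next hnext hcyc (ρ.1 v) (l₁.count v) ((-(n v)).toNat)
    rw [ρ.2 v] at h2
    rw [hAa]
    rw [h2]
    exact (hrot₁ v).symm
  have hlastB : ∀ v : Vne s, next^[Bb v] (ρ.1 v) = ρ₂'.1 v := by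
    intro v
    have h2 := iter_add_mul tail next hnext hcyc (ρ.1 v) (l₂.count v) ((n v).toNat)
    rw [ρ.2 v] at h2
    rw [hBb]
    rw [h2]
    exact (hrot₂ v).symm
  have hWA : ∀ (v w : Vne s), winS head next (ρ.1 v) w.1 0 (Aa v)
      = winS head next (ρ.1 v) w.1 0 (l₁.count v)
        + ((-(n v)).toNat : ℤ) * numEdges tail head v.1 w.1 := by
    intro v w
    have h3 := winS_add_mul tail head next hnext hcyc (ρ.1 v) w.1 (l₁.count v) ((-(n v)).toNat)
    rw [ρ.2 v] at h3
    exact h3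
  have hWB : ∀ (v w : Vne s), winS head next (ρ.1 v) w.1 0 (Bb v)
      = winS head next (ρ.1 v) w.1 0 (l₂.count v)
        + ((n v).toNat : ℤ) * numEdges tail head v.1 w.1 := by
    intro v w
    have h3 := winS_add_mul tail head next hnext hcyc (ρ.1 v) w.1 (l₂.count v) ((n v).toNat)
    rw [ρ.2 v] at h3
    exact h3
  have hidA : ∀ w : Vne s, ((Aa w : ℤ) - Bb w)
      = ∑ v : Vne s, (winS head next (ρ.1 v) w.1 0 (Aa v)
          - winS head next (ρ.1 v) w.1 0 (Bb v)) := by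
    intro w
    have hsum : (∑ v : Vne s, (winS head next (ρ.1 v) w.1 0 (Aa v)
        - winS head next (ρ.1 v) w.1 0 (Bb v)))
        = ∑ v : Vne s, (winS head next (ρ.1 v) w.1 0 (l₁.count v)
            - winS head next (ρ.1 v) w.1 0 (l₂.count v)
            - n v * numEdges tail head v.1 w.1) := by
      apply Finset.sum_congr rfl
      intro v _
      rw [hWA v w, hWB v w]
      have ht : ((n v).toNat : ℤ) - ((-(n v)).toNat : ℤ) = n v := by omega
      linear_combination (-(numEdges tail head v.1 w.1 : ℤ)) * ht
    rw [hsum, ← hid_pre w]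
    have ht : ((n w).toNat : ℤ) - ((-(n w)).toNat : ℤ) = n w := by omega
    have hcA : ((Aa w : ℕ) : ℤ) = (l₁.count w : ℤ)
        + ((-(n w)).toNat : ℤ) * outdeg tail w.1 := by
      rw [hAa]; push_cast; ring
    have hcB : ((Bb w : ℕ) : ℤ) = (l₂.count w : ℤ)
        + ((n w).toNat : ℤ) * outdeg tail w.1 := by
      rw [hBb]; push_cast; ring
    rw [hcA, hcB]
    linear_combination (-(outdeg tail w.1 : ℤ)) * ht
  have hidB : ∀ w : Vne s, ((Bb w : ℤ) - Aa w)
      = ∑ v : Vne s, (winS head next (ρ.1 v) w.1 0 (Bb v)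
          - winS head next (ρ.1 v) w.1 0 (Aa v)) := by
    intro w
    have h4 := hidA w
    have h5 : (∑ v : Vne s, (winS head next (ρ.1 v) w.1 0 (Bb v)
        - winS head next (ρ.1 v) w.1 0 (Aa v)))
        = -∑ v : Vne s, (winS head next (ρ.1 v) w.1 0 (Aa v)
            - winS head next (ρ.1 v) w.1 0 (Bb v)) := by
      rw [← Finset.sum_neg_distrib]
      exact Finset.sum_congr rfl (fun v _ => by ring)
    rw [h5]
    linarith
  have hle1 := core_lemma tail head next hnext hcyc ρ ρ₁' hac₁ Aa Bb hlastA hidA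
  have hle2 := core_lemma tail head next hnext hcyc ρ ρ₂' hac₂ Bb Aa hlastB hidB
  apply Subtype.ext
  funext v
  rw [← hlastA v, ← hlastB v, le_antisymm (hle1 v) (hle2 v)]
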